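/- arXiv:1508.06865 — 3 statements merged into one kernel-verified Lean document; each statement's English description precedes it below -/
import Mathlib

section
/- If a scenario f : ℝ → S is past-affine-invariant on (-∞, x), i.e., there exists a non-identity strictly increasing affine map t(y) = ay + b with a > 0 such that f agrees with f ∘ t on (-∞, x), then there exists a scenario g : ℝ → S that is affine-invariant (g = g ∘ t' for some non-identity strictly increasing affine t') and agrees with f on (-∞, x). -/
theorem aux_invariant_extension {S : Type*} (f : ℝ → S) (x : ℝ) (d : ℝ → ℝ)
    (hA : ∀ y < x, d y < x) (hB : ∀ y < x, f y = f (d y)) :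
    ∃ g : ℝ → S, (∀ y, g y = g (d y)) ∧ ∀ y < x, g y = f y := by
  classical
  set P : ℝ → Prop := fun y => ∃ n, d^[n] y < x with hPdef
  refine ⟨fun y => if h : P y then f (d^[Nat.find h] y) else f x, ?_, ?_⟩
  · intro y
    by_cases h : P y
    · have hn := Nat.find_spec h
      set n := Nat.find h with hn'
      have hPd : P (d y) := by
        rcases Nat.eq_zero_or_pos n with h0 | hpos
        · exact ⟨0, by simpa using hA y (by simpa [h0] using hn)⟩
        · refine ⟨n - 1, ?_⟩
          have h1 : d^[n - 1] (d y) = d^[n] y := by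
            rw [← Function.iterate_succ_apply]
            congr 1
            omega
          rw [h1]
          exact hn
      simp only [dif_pos h, dif_pos hPd]
      set m := Nat.find hPd with hm'
      have hm := Nat.find_spec hPd
      rcases Nat.eq_zero_or_pos n with h0 | hpos
      · have hy : y < x := by simpa [h0] using hn
        have hm0 : m = 0 :=
          Nat.eq_zero_of_le_zero (Nat.find_le (by simpa using hA y hy))
        rw [← hn', h0, hm0]
        simpa using hB y hy
      · have hge : n - 1 ≤ m := by
          by_contra hc
          push_neg at hc
          have hlt : m + 1 < n := by omega
          have := Nat.find_min h hlt
          rw [Function.iterate_succ_apply] at this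
          exact this hm
        have h1 : d^[n - 1] (d y) = d^[n] y := by
          rw [← Function.iterate_succ_apply]
          congr 1
          omega
        have hle : m ≤ n - 1 := by
          apply Nat.find_le
          rw [h1]
          exact hn
        have hmn : m = n - 1 := le_antisymm hle hge
        rw [← hn', hmn, h1]
    · have hPd : ¬ P (d y) := by
        rintro ⟨m, hm⟩
        exact h ⟨m + 1, by rwa [Function.iterate_succ_apply]⟩
      simp only [dif_neg h, dif_neg hPd]
  · intro y hy
    have h : P y := ⟨0, by simpa using hy⟩
    have h0 : Nat.find h = 0 :=
      Nat.eq_zero_of_le_zero (Nat.find_le (by simpa using hy))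
    simp only [dif_pos h, h0, Function.iterate_zero_apply]

theorem past_affine_invariant_extension {S : Type*} (f : ℝ → S) (x a b : ℝ)
    (ha : 0 < a) (hnid : ¬ ∀ y : ℝ, a * y + b = y)
    (hpai : ∀ y < x, f y = f (a * y + b)) :
    ∃ (g : ℝ → S) (a' b' : ℝ), 0 < a' ∧ (¬ ∀ y : ℝ, a' * y + b' = y) ∧
      (∀ y, g y = g (a' * y + b')) ∧ ∀ y < x, g y = f y := by
  by_cases hle : a * x + b ≤ x
  · have hA : ∀ y < x, (fun y => a * y + b) y < x := by
      intro y hy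
      have : a * y < a * x := mul_lt_mul_of_pos_left hy ha
      simp only
      linarith
    obtain ⟨g, hg1, hg2⟩ := aux_invariant_extension f x (fun y => a * y + b) hA hpai
    exact ⟨g, a, b, ha, hnid, hg1, hg2⟩
  · push_neg at hle
    have hainv : 0 < a⁻¹ := inv_pos.2 ha
    have hcancel : a * a⁻¹ = 1 := mul_inv_cancel₀ ha.ne'
    have hA : ∀ y < x, (fun y => a⁻¹ * y + -(a⁻¹ * b)) y < x := by
      intro y hy
      simp only
      have h3 : a⁻¹ * (a * x + b) = x + a⁻¹ * b := by
        rw [mul_add, ← mul_assoc, inv_mul_cancel₀ ha.ne', one_mul]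
      have h4 := mul_lt_mul_of_pos_left hy hainv
      have h5 := mul_lt_mul_of_pos_left hle hainv
      rw [h3] at h5
      linarith
    have hkey : ∀ y : ℝ, a * (a⁻¹ * y + -(a⁻¹ * b)) + b = y := by
      intro y
      field_simp
      ring
    have hB : ∀ y < x, f y = f ((fun y => a⁻¹ * y + -(a⁻¹ * b)) y) := by
      intro y hy
      have hdy := hA y hy
      simp only at hdy ⊢
      have := hpai _ hdy
      rw [hkey] at this
      exact this.symm
    obtain ⟨g, hg1, hg2⟩ :=
      aux_invariant_extension f x (fun y => a⁻¹ * y + -(a⁻¹ * b)) hA hB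
    refine ⟨g, a⁻¹, -(a⁻¹ * b), hainv, ?_, hg1, hg2⟩
    intro hid
    apply hnid
    intro y
    have h1 := hid (a * y + b)
    have h2 : a⁻¹ * (a * y + b) + -(a⁻¹ * b) = y := by
      field_simp
      ring
    rw [h2] at h1
    exact h1.symm
end

section
/- There exists a predictor P : (ℝ → S) → (ℝ → S) such that for every scenario f : ℝ → S, the set {x ∈ ℝ : P(f)(x) ≠ f(x)} is countable. -/
open Set

/-- A well-founded (under `<`) subset of ℝ is countable. -/
lemma isWF_countable_aux {s : Set ℝ} (hs : s.IsWF) : s.Countable := by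
  classical
  set y : ℝ → ℝ := fun x =>
    if h : (s ∩ Ioi x).Nonempty then (hs.mono inter_subset_left).min h else x + 1 with hy
  have hlt : ∀ x ∈ s, x < y x := by
    intro x hx
    by_cases h : (s ∩ Ioi x).Nonempty
    · have := (hs.mono inter_subset_left).min_mem h
      simp only [hy, dif_pos h]
      exact this.2
    · simp only [hy, dif_neg h]; linarith
  have hle : ∀ x x', x' ∈ s ∩ Ioi x → y x ≤ x' := by
    intro x x' hx'
    have h : (s ∩ Ioi x).Nonempty := ⟨x', hx'⟩
    simp only [hy, dif_pos h]
    exact not_lt.1 ((hs.mono inter_subset_left).not_lt_min h hx')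
  apply Set.PairwiseDisjoint.countable_of_Ioo (y := y) _ hlt
  have key : ∀ a ∈ s, ∀ b ∈ s, a < b → Disjoint (Ioo a (y a)) (Ioo b (y b)) := by
    intro a ha b hb h
    have hba : y a ≤ b := hle a b ⟨hb, h⟩
    apply disjoint_iff_forall_ne.2
    rintro c hc d hd rfl
    exact absurd (hc.2.trans_le hba) (not_lt.2 hd.1.le)
  intro a ha b hb hab
  rcases lt_trichotomy a b with h | h | h
  · exact key a ha b hb h
  · exact absurd h hab
  · exact (key b hb a ha h).symm

theorem hardin_taylor {S : Type*} [Nonempty S] :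
    ∃ P : (ℝ → S) → (ℝ → S),
      (∀ (f g : ℝ → S) (x : ℝ), (∀ y < x, f y = g y) → P f x = P g x) ∧
      ∀ f : ℝ → S, {x : ℝ | P f x ≠ f x}.Countable := by
  classical
  set r : (ℝ → S) → (ℝ → S) → Prop := WellOrderingRel with hr
  have wf : WellFounded r := WellOrderingRel.isWellOrder.toIsWellFounded.wf
  set C : (ℝ → S) → ℝ → Set (ℝ → S) := fun f x => {g | ∀ y < x, g y = f y} with hC
  have hmem : ∀ f x, f ∈ C f x := fun f x y _ => rfl
  set u : (ℝ → S) → ℝ → (ℝ → S) := fun f x => wf.min (C f x) ⟨f, hmem f x⟩ with hu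
  have humem : ∀ f x, u f x ∈ C f x := fun f x => wf.min_mem _ _
  have hunot : ∀ f x g, g ∈ C f x → ¬ r g (u f x) := fun f x g hg => wf.not_lt_min _ hg
  refine ⟨fun f x => u f x x, ?_, ?_⟩
  · intro f g x h
    have hCeq : C f x = C g x := by
      ext k
      exact ⟨fun hk y hy => (hk y hy).trans (h y hy),
        fun hk y hy => (hk y hy).trans (h y hy).symm⟩
    have : u f x = u g x := by
      simp only [hu]
      congr 1
    show u f x x = u g x x
    rw [this]
  · intro f
    have hwf : {x : ℝ | u f x x ≠ f x}.IsWF := by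
      rw [Set.IsWF, Set.wellFoundedOn_iff]
      refine Subrelation.wf (r := InvImage r (u f)) ?_ (InvImage.wf _ wf)
      rintro a b ⟨hab, ha, hb⟩
      -- a < b, both error points; u f b ∈ C f a
      have hba : u f b ∈ C f a := fun y hy => humem f b y (hy.trans hab)
      have hne : u f b ≠ u f a := by
        intro h
        apply ha
        rw [← h]
        exact humem f b a hab
      have hnot : ¬ r (u f b) (u f a) := hunot f a _ hba
      rcases (trichotomous_of WellOrderingRel (u f a) (u f b)) with h | h | h
      · exact h
      · exact absurd h.symm hne
      · exact absurd h hnot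
    exact isWF_countable_aux hwf
end

section
/- There exists a T₂-anonymous predictor P : (ℝ → S) → (ℝ → S) such that for every scenario f, the set {x ∈ ℝ : P(f)(x) ≠ f(x)} is countable. -/
open scoped Classical

set_option linter.unusedSectionVars false

noncomputable section

namespace T2AP

variable {S : Type*} [Nonempty S]

/-! ## The key combinatorial lemma -/

/-- The 12-step chase, in the case `s = a - a*β - b + b*α < 0`. -/
lemma key0neg (h : ℝ → S) {α a β b : ℝ} (hα : 0 < α) (hβ : 0 < β) (ha : a < 0) (hb : b < 0)
    (hA : ∀ z, z < 0 → h (α * z + a) = h z) (hB : ∀ z, z < 0 → h (β * z + b) = h z)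
    (hs : a - a * β - b + b * α < 0) : h a = h b := by
  have hα' : α ≠ 0 := ne_of_gt hα
  have hβ' : β ≠ 0 := ne_of_gt hβ
  set s : ℝ := a - a * β - b + b * α with hs_def
  have hz1 : β * a + b < 0 := by nlinarith
  have hz3 : s / β + a + a * α < 0 := by
    have h1 : s / β < 0 := div_neg_of_neg_of_pos hs hβ
    nlinarith
  have hz4 : s / (α * β) + a < 0 := by
    have h1 : s / (α * β) < 0 := div_neg_of_neg_of_pos hs (by positivity)
    linarith
  have hz5 : s / (α ^ 2 * β) < 0 := div_neg_of_neg_of_pos hs (by positivity)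
  have hz6 : s / α ^ 2 + b < 0 := by
    have h1 : s / α ^ 2 < 0 := div_neg_of_neg_of_pos hs (by positivity)
    linarith
  have hsn : s * (1 + α) < 0 := mul_neg_of_neg_of_pos hs (by linarith)
  have hz8 : s * (1 + α) / (α * β) + a < 0 := by
    have h1 : s * (1 + α) / (α * β) < 0 := div_neg_of_neg_of_pos hsn (by positivity)
    linarith
  have hz9 : s * (1 + α) / β + α * a + a < 0 := by
    have h1 : s * (1 + α) / β < 0 := div_neg_of_neg_of_pos hsn hβ
    nlinarith
  have hz11 : a + α * b < 0 := by nlinarith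
  have e1 : h (β * a + b) = h a := hB a ha
  have e2 : h (α * (β * a + b) + a) = h (β * a + b) := hA _ hz1
  have e3 : h (β * (s / β + a + a * α) + b) = h (s / β + a + a * α) := hB _ hz3
  have e3' : α * (β * a + b) + a = β * (s / β + a + a * α) + b := by
    rw [hs_def]; field_simp; ring
  have e4 : h (α * (s / (α * β) + a) + a) = h (s / (α * β) + a) := hA _ hz4
  have e4' : s / β + a + a * α = α * (s / (α * β) + a) + a := by
    field_simp; ring
  have e5 : h (α * (s / (α ^ 2 * β)) + a) = h (s / (α ^ 2 * β)) := hA _ hz5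
  have e5' : s / (α * β) + a = α * (s / (α ^ 2 * β)) + a := by
    field_simp
  have e6 : h (β * (s / (α ^ 2 * β)) + b) = h (s / (α ^ 2 * β)) := hB _ hz5
  have e6' : β * (s / (α ^ 2 * β)) + b = s / α ^ 2 + b := by
    field_simp
  have e7 : h (α * (s / α ^ 2 + b) + a) = h (s / α ^ 2 + b) := hA _ hz6
  have e8 : h (β * (s * (1 + α) / (α * β) + a) + b) = h (s * (1 + α) / (α * β) + a) := hB _ hz8
  have e8' : α * (s / α ^ 2 + b) + a = β * (s * (1 + α) / (α * β) + a) + b := by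
    rw [hs_def]; field_simp; ring
  have e9 : h (α * (s * (1 + α) / (α * β) + a) + a) = h (s * (1 + α) / (α * β) + a) := hA _ hz8
  have e9' : α * (s * (1 + α) / (α * β) + a) + a = s * (1 + α) / β + α * a + a := by
    field_simp
  have e10 : h (β * (s * (1 + α) / β + α * a + a) + b) = h (s * (1 + α) / β + α * a + a) :=
    hB _ hz9
  have e11 : h (α * (a + α * b) + a) = h (a + α * b) := hA _ hz11
  have e11' : β * (s * (1 + α) / β + α * a + a) + b = α * (a + α * b) + a := by
    rw [hs_def]; field_simp; ring
  have e12 : h (α * b + a) = h b := hA b hb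
  calc h a = h (β * a + b) := e1.symm
    _ = h (α * (β * a + b) + a) := e2.symm
    _ = h (β * (s / β + a + a * α) + b) := by rw [e3']
    _ = h (s / β + a + a * α) := e3
    _ = h (α * (s / (α * β) + a) + a) := by rw [← e4']
    _ = h (s / (α * β) + a) := e4
    _ = h (α * (s / (α ^ 2 * β)) + a) := by rw [← e5']
    _ = h (s / (α ^ 2 * β)) := e5
    _ = h (β * (s / (α ^ 2 * β)) + b) := e6.symm
    _ = h (s / α ^ 2 + b) := by rw [e6']
    _ = h (α * (s / α ^ 2 + b) + a) := e7.symm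
    _ = h (β * (s * (1 + α) / (α * β) + a) + b) := by rw [e8']
    _ = h (s * (1 + α) / (α * β) + a) := e8
    _ = h (α * (s * (1 + α) / (α * β) + a) + a) := e9.symm
    _ = h (s * (1 + α) / β + α * a + a) := by rw [e9']
    _ = h (β * (s * (1 + α) / β + α * a + a) + b) := e10.symm
    _ = h (α * (a + α * b) + a) := by rw [e11']
    _ = h (a + α * b) := e11
    _ = h (α * b + a) := by rw [add_comm]
    _ = h b := e12

/-- Key lemma, base point `0`. -/
lemma key0 (h : ℝ → S) {α a β b : ℝ} (hα : 0 < α) (hβ : 0 < β) (ha : a < 0) (hb : b < 0)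
    (hA : ∀ z, z < 0 → h (α * z + a) = h z) (hB : ∀ z, z < 0 → h (β * z + b) = h z) :
    h a = h b := by
  rcases lt_trichotomy (a - a * β - b + b * α) 0 with hs | hs | hs
  · exact key0neg h hα hβ ha hb hA hB hs
  · have hba : β * a + b = α * b + a := by linarith
    calc h a = h (β * a + b) := (hB a ha).symm
      _ = h (α * b + a) := by rw [hba]
      _ = h b := hA b hb
  · have hs' : b - b * α - a + a * β < 0 := by linarith
    exact (key0neg h hβ hα hb ha hB hA hs').symm

/-- Key lemma, general base point: two affine contractions valid below `x₀` have
boundary images with equal `h`-values. -/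
lemma keyGen (h : ℝ → S) {x₀ α a β b : ℝ} (hα : 0 < α) (hβ : 0 < β)
    (hA : ∀ w, w < x₀ → h (α * w + a) = h w) (hB : ∀ w, w < x₀ → h (β * w + b) = h w)
    (hA0 : α * x₀ + a < x₀) (hB0 : β * x₀ + b < x₀) :
    h (α * x₀ + a) = h (β * x₀ + b) := by
  set h' : ℝ → S := fun u => h (u + x₀) with hh'
  have hA' : ∀ z, z < 0 → h' (α * z + (α * x₀ + a - x₀)) = h' z := by
    intro z hz
    show h (α * z + (α * x₀ + a - x₀) + x₀) = h (z + x₀)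
    have harg : α * z + (α * x₀ + a - x₀) + x₀ = α * (z + x₀) + a := by ring
    rw [harg]
    exact hA _ (by linarith)
  have hB' : ∀ z, z < 0 → h' (β * z + (β * x₀ + b - x₀)) = h' z := by
    intro z hz
    show h (β * z + (β * x₀ + b - x₀) + x₀) = h (z + x₀)
    have harg : β * z + (β * x₀ + b - x₀) + x₀ = β * (z + x₀) + b := by ring
    rw [harg]
    exact hB _ (by linarith)
  have hkey := key0 h' hα hβ (show α * x₀ + a - x₀ < 0 by linarith)
    (show β * x₀ + b - x₀ < 0 by linarith) hA' hB'
  have l1 : h' (α * x₀ + a - x₀) = h (α * x₀ + a) := by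
    show h (α * x₀ + a - x₀ + x₀) = h (α * x₀ + a)
    norm_num
  have l2 : h' (β * x₀ + b - x₀) = h (β * x₀ + b) := by
    show h (β * x₀ + b - x₀ + x₀) = h (β * x₀ + b)
    norm_num
  rw [l1, l2] at hkey
  exact hkey

/-! ## The germ relation -/

/-- `Rel g p f x` : an increasing affine map carries the germ of `g` on `(-∞, p)`
onto the germ of `f` on `(-∞, x)`, sending `p` to `x`. -/
def Rel (g : ℝ → S) (p : ℝ) (f : ℝ → S) (x : ℝ) : Prop :=
  ∃ c d : ℝ, 0 < c ∧ c * p + d = x ∧ ∀ y, y < p → g y = f (c * y + d)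

lemma rel_refl (f : ℝ → S) (x : ℝ) : Rel f x f x :=
  ⟨1, 0, one_pos, by ring, fun y _ => by norm_num⟩

lemma rel_symm {g f : ℝ → S} {p x : ℝ} (h : Rel g p f x) : Rel f x g p := by
  obtain ⟨c, d, hc, hcd, hval⟩ := h
  have hc' : c ≠ 0 := ne_of_gt hc
  refine ⟨c⁻¹, -(d / c), by positivity, ?_, ?_⟩
  · field_simp
    linarith [hcd]
  · intro w hw
    have hform : c⁻¹ * w + -(d / c) = (w - d) / c := by field_simp; ring
    have hy : (w - d) / c < p := by
      rw [div_lt_iff₀ hc]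
      nlinarith [hcd]
    have hv := hval _ hy
    rw [hform, hv]
    have harg : c * ((w - d) / c) + d = w := by field_simp; ring
    rw [harg]

lemma rel_trans {g1 g2 g3 : ℝ → S} {p1 p2 p3 : ℝ}
    (h12 : Rel g1 p1 g2 p2) (h23 : Rel g2 p2 g3 p3) : Rel g1 p1 g3 p3 := by
  obtain ⟨c, d, hc, hcd, hval⟩ := h12
  obtain ⟨c', d', hc', hcd', hval'⟩ := h23
  refine ⟨c' * c, c' * d + d', by positivity, by rw [← hcd', ← hcd]; ring, ?_⟩
  intro y hy
  have h1 : g1 y = g2 (c * y + d) := hval y hy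
  have h2 : c * y + d < p2 := by nlinarith
  have h3 : g2 (c * y + d) = g3 (c' * (c * y + d) + d') := hval' _ h2
  rw [h1, h3]
  ring_nf

/-- `Rel` into `(f, x)` only depends on `f` strictly below `x`. -/
lemma rel_congr {g f f' : ℝ → S} {p x : ℝ} (hff' : ∀ y, y < x → f y = f' y) :
    Rel g p f x → Rel g p f' x := by
  rintro ⟨c, d, hc, hcd, hval⟩
  refine ⟨c, d, hc, hcd, fun y hy => ?_⟩
  rw [hval y hy, hff' _ (by nlinarith)]

/-- transport of `Rel` along an affine reparametrization of `f`. -/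
lemma rel_anon {g f : ℝ → S} {p x a b : ℝ} (ha : 0 < a) :
    Rel g p (fun y => f (a * y + b)) x ↔ Rel g p f (a * x + b) := by
  constructor
  · rintro ⟨c, d, hc, hcd, hval⟩
    refine ⟨a * c, a * d + b, by positivity, by rw [← hcd]; ring, fun y hy => ?_⟩
    rw [hval y hy]
    ring_nf
  · rintro ⟨c, d, hc, hcd, hval⟩
    have ha' : a ≠ 0 := ne_of_gt ha
    refine ⟨c / a, (d - b) / a, by positivity, ?_, fun y hy => ?_⟩
    · field_simp
      linarith [hcd]
    · rw [hval y hy]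
      have harg : a * (c / a * y + (d - b) / a) + b = c * y + d := by
        field_simp
        ring
      show f (c * y + d) = f (a * (c / a * y + (d - b) / a) + b)
      rw [harg]

/-! ## The predictor -/

/-- candidate realizers of the germ class of `(f, x)`. -/
def Cand (f : ℝ → S) (x : ℝ) : Set (ℝ → S) := {g | ∃ p, Rel g p f x}

lemma cand_nonempty (f : ℝ → S) (x : ℝ) : (Cand f x).Nonempty :=
  ⟨f, x, rel_refl f x⟩

/-- the minimal realizer w.r.t. a fixed well-ordering of all scenarios. -/
def gmin (f : ℝ → S) (x : ℝ) : ℝ → S :=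
  (IsWellFounded.wf (r := (WellOrderingRel : (ℝ → S) → (ℝ → S) → Prop))).min
    (Cand f x) (cand_nonempty f x)

lemma gmin_mem (f : ℝ → S) (x : ℝ) : gmin f x ∈ Cand f x :=
  WellFounded.min_mem _ _ _

lemma gmin_not_lt {f : ℝ → S} {x : ℝ} {g : ℝ → S} (hg : g ∈ Cand f x) :
    ¬ WellOrderingRel g (gmin f x) :=
  WellFounded.not_lt_min _ _ hg

lemma gmin_eq_of_cand_eq {f f' : ℝ → S} {x x' : ℝ} (h : Cand f x = Cand f' x') :
    gmin f x = gmin f' x' := by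
  unfold gmin
  congr 1

/-- the set of points where the minimal realizer realizes the class. -/
def Mset (f : ℝ → S) (x : ℝ) : Set ℝ := {p | Rel (gmin f x) p f x}

/-- the non-maximal points of `Mset`. -/
def Msel (f : ℝ → S) (x : ℝ) : Set ℝ :=
  {p | p ∈ Mset f x ∧ ∃ r ∈ Mset f x, p < r}

/-- a choice function on sets of reals. -/
def pick (s : Set ℝ) : ℝ := if h : s.Nonempty then h.some else 0

lemma pick_mem {s : Set ℝ} (h : s.Nonempty) : pick s ∈ s := by
  rw [pick, dif_pos h]
  exact h.some_mem

/-- the evaluation point. -/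
def sel (f : ℝ → S) (x : ℝ) : ℝ :=
  if (Msel f x).Nonempty then pick (Msel f x) else pick (Mset f x)

/-- The predictor. -/
def P (f : ℝ → S) (x : ℝ) : S := gmin f x (sel f x)

/-! ### The predictor depends only on the strict past -/

lemma cand_congr {f f' : ℝ → S} {x : ℝ} (hff' : ∀ y, y < x → f y = f' y) :
    Cand f x = Cand f' x := by
  ext g
  constructor
  · rintro ⟨p, hp⟩; exact ⟨p, rel_congr hff' hp⟩
  · rintro ⟨p, hp⟩; exact ⟨p, rel_congr (fun y hy => (hff' y hy).symm) hp⟩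

lemma P_congr {f f' : ℝ → S} {x : ℝ} (hff' : ∀ y, y < x → f y = f' y) :
    P f x = P f' x := by
  have hcand : Cand f x = Cand f' x := cand_congr hff'
  have hg : gmin f x = gmin f' x := gmin_eq_of_cand_eq hcand
  have hM : Mset f x = Mset f' x := by
    ext p
    constructor
    · intro hp
      exact rel_congr hff' (by rwa [← hg])
    · intro hp
      have h2 := rel_congr (fun y hy => (hff' y hy).symm) hp
      show Rel (gmin f x) p f x
      rwa [hg]
  have hM' : Msel f x = Msel f' x := by unfold Msel; rw [hM]
  unfold P sel
  rw [hg, hM, hM']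

/-! ### Anonymity -/

lemma cand_anon {f : ℝ → S} {x a b : ℝ} (ha : 0 < a) :
    Cand (fun y => f (a * y + b)) x = Cand f (a * x + b) := by
  ext g
  constructor
  · rintro ⟨p, hp⟩; exact ⟨p, (rel_anon ha).mp hp⟩
  · rintro ⟨p, hp⟩; exact ⟨p, (rel_anon ha).mpr hp⟩

lemma P_anon {f : ℝ → S} {x a b : ℝ} (ha : 0 < a) :
    P (fun y => f (a * y + b)) x = P f (a * x + b) := by
  have hcand := cand_anon (f := f) (x := x) (b := b) ha
  have hg : gmin (fun y => f (a * y + b)) x = gmin f (a * x + b) :=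
    gmin_eq_of_cand_eq hcand
  have hM : Mset (fun y => f (a * y + b)) x = Mset f (a * x + b) := by
    ext p
    unfold Mset
    rw [Set.mem_setOf_eq, Set.mem_setOf_eq, hg, rel_anon ha]
  have hM' : Msel (fun y => f (a * y + b)) x = Msel f (a * x + b) := by
    unfold Msel; rw [hM]
  unfold P sel
  rw [hg, hM, hM']

/-! ## Class value lemmas -/

/-- VC-corollary: two class points below a common class point have equal values. -/
lemma vc {g : ℝ → S} {p1 p2 p3 : ℝ} (h1 : Rel g p1 g p3) (h2 : Rel g p2 g p3)
    (hlt1 : p1 < p3) (hlt2 : p2 < p3) : g p1 = g p2 := by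
  obtain ⟨c1, d1, hc1, hcd1, hval1⟩ := h1
  obtain ⟨c2, d2, hc2, hcd2, hval2⟩ := h2
  have hc1' : c1 ≠ 0 := ne_of_gt hc1
  have hc2' : c2 ≠ 0 := ne_of_gt hc2
  have hΨ1 : ∀ w, w < p3 → g (c1⁻¹ * w + -(d1 / c1)) = g w := by
    intro w hw
    have hform : c1⁻¹ * w + -(d1 / c1) = (w - d1) / c1 := by field_simp; ring
    have hy : (w - d1) / c1 < p1 := by
      rw [div_lt_iff₀ hc1]
      nlinarith
    have hv := hval1 _ hy
    rw [hform, hv]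
    have harg : c1 * ((w - d1) / c1) + d1 = w := by field_simp; ring
    rw [harg]
  have hΨ2 : ∀ w, w < p3 → g (c2⁻¹ * w + -(d2 / c2)) = g w := by
    intro w hw
    have hform : c2⁻¹ * w + -(d2 / c2) = (w - d2) / c2 := by field_simp; ring
    have hy : (w - d2) / c2 < p2 := by
      rw [div_lt_iff₀ hc2]
      nlinarith
    have hv := hval2 _ hy
    rw [hform, hv]
    have harg : c2 * ((w - d2) / c2) + d2 = w := by field_simp; ring
    rw [harg]
  have hb1 : c1⁻¹ * p3 + -(d1 / c1) = p1 := by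
    field_simp
    linarith
  have hb2 : c2⁻¹ * p3 + -(d2 / c2) = p2 := by
    field_simp
    linarith
  have hkey := keyGen g (x₀ := p3) (show (0:ℝ) < c1⁻¹ by positivity)
    (show (0:ℝ) < c2⁻¹ by positivity) hΨ1 hΨ2 (by rw [hb1]; exact hlt1) (by rw [hb2]; exact hlt2)
  rwa [hb1, hb2] at hkey

/-- A "bad maximum" of `g` : a maximum of its own germ-class which breaks the class value. -/
def BadMax (g : ℝ → S) (m : ℝ) : Prop :=
  (∀ p, Rel g p g m → p ≤ m) ∧ ∃ p, Rel g p g m ∧ p < m ∧ g p ≠ g m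

/-- There are no three bad maxima. -/
lemma badMax_not3 {g : ℝ → S} {m1 m2 m3 : ℝ} (h12 : m1 < m2) (h23 : m2 < m3)
    (hb1 : BadMax g m1) (hb2 : BadMax g m2) (hb3 : BadMax g m3) : False := by
  obtain ⟨-, p3, ⟨c, d, hc, hcd, hval⟩, hp3lt, -⟩ := hb3
  have hc' : c ≠ 0 := ne_of_gt hc
  have hfix : ∀ m, m < m3 → BadMax g m → (m - d) / c = m := by
    rintro m hm ⟨hmax, phat, hphatrel, hphatlt, hphatne⟩
    have hvmlt : (m - d) / c < p3 := by
      rw [div_lt_iff₀ hc]; nlinarith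
    have harg : c * ((m - d) / c) + d = m := by field_simp; ring
    have hrel : Rel g ((m - d) / c) g m := by
      refine ⟨c, d, hc, harg, fun y hy => ?_⟩
      exact hval y (lt_trans hy hvmlt)
    have hle : (m - d) / c ≤ m := hmax _ hrel
    rcases lt_or_eq_of_le hle with hlt | heq
    · exfalso
      have hveq : g ((m - d) / c) = g m := by
        have hv := hval _ hvmlt
        rw [hv, harg]
      have hvcc := vc hrel hphatrel hlt hphatlt
      rw [hveq] at hvcc
      exact hphatne hvcc.symm
    · exact heq
  have h1 := hfix m1 (lt_trans h12 h23) hb1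
  have h2 := hfix m2 h23 hb2
  have e1 : m1 - d = c * m1 := by
    rw [div_eq_iff hc'] at h1; linarith
  have e2 : m2 - d = c * m2 := by
    rw [div_eq_iff hc'] at h2; linarith
  have hcone : c = 1 := by
    have h3 : (c - 1) * (m1 - m2) = 0 := by nlinarith
    rcases mul_eq_zero.mp h3 with h | h
    · linarith
    · exfalso; have : m1 = m2 := by linarith
      linarith
  have hd0 : d = 0 := by
    rw [hcone] at e1; linarith
  rw [hcone, hd0] at hcd
  simp at hcd
  linarith

/-! ## Goodness -/

section Goodness

variable (f : ℝ → S)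

/-- monotonicity of candidate sets. -/
lemma cand_mono {x z : ℝ} (hxz : x < z) : Cand f z ⊆ Cand f x := by
  rintro g ⟨p, c, d, hc, hcd, hval⟩
  have hc' : c ≠ 0 := ne_of_gt hc
  have hq : (x - d) / c < p := by
    rw [div_lt_iff₀ hc]; nlinarith
  have harg : c * ((x - d) / c) + d = x := by field_simp; ring
  exact ⟨(x - d) / c, c, d, hc, harg, fun y hy => hval y (lt_trans hy hq)⟩

/-- the set of "level maxima". -/
def Xone : Set ℝ := {x | ∀ z, x < z → gmin f z ≠ gmin f x}

lemma not_xone {x : ℝ} (hx : x ∉ Xone f) : ∃ z, x < z ∧ gmin f z = gmin f x := by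
  unfold Xone at hx
  rw [Set.mem_setOf_eq] at hx
  push_neg at hx
  exact hx

lemma gmin_no_lt {x z : ℝ} (hxz : x < z) :
    ¬ WellOrderingRel (gmin f z) (gmin f x) :=
  gmin_not_lt (cand_mono f hxz (gmin_mem f z))

/-- sandwich: levels are order-convex. -/
lemma gmin_sandwich {x y z : ℝ} (hxy : x < y) (hyz : y < z)
    (hxz : gmin f z = gmin f x) : gmin f y = gmin f x := by
  have h1 : ¬ WellOrderingRel (gmin f y) (gmin f x) := gmin_no_lt f hxy
  have h2 : ¬ WellOrderingRel (gmin f z) (gmin f y) := gmin_no_lt f hyz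
  rcases trichotomous_of (WellOrderingRel : (ℝ → S) → (ℝ → S) → Prop)
      (gmin f y) (gmin f x) with h | h | h
  · exact absurd h h1
  · exact h
  · rw [← hxz] at h
    exact absurd h h2

/-- Any subset of ℝ on which `<` is well-founded (as a subtype relation) is countable. -/
lemma countable_of_wf {A : Set ℝ}
    (hwf : WellFounded (fun x y : A => (x : ℝ) < (y : ℝ))) : A.Countable := by
  classical
  have hQ : ∀ x : A, (∃ y : A, (x : ℝ) < (y : ℝ)) → ∃ q : ℚ,
      (x : ℝ) < (q : ℝ) ∧ ∀ y : A, (x : ℝ) < (y : ℝ) → (q : ℝ) < (y : ℝ) := by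
    intro x hx
    set T : Set A := {y | (x : ℝ) < (y : ℝ)} with hT
    have hTne : T.Nonempty := hx
    set m : A := hwf.min T hTne with hm
    have hmT : m ∈ T := hwf.min_mem T hTne
    obtain ⟨q, hq1, hq2⟩ := exists_rat_btwn (show (x : ℝ) < (m : ℝ) from hmT)
    refine ⟨q, hq1, fun y hy => ?_⟩
    have hnm : ¬ ((y : ℝ) < (m : ℝ)) := hwf.not_lt_min T hy
    push_neg at hnm
    exact lt_of_lt_of_le hq2 hnm
  set F : A → ℚ := fun x => if hx : (∃ y : A, (x : ℝ) < (y : ℝ)) then (hQ x hx).choose else 0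
    with hF
  have hinj : ∀ x1 x2 : A, (∃ y : A, (x1 : ℝ) < (y : ℝ)) → (∃ y : A, (x2 : ℝ) < (y : ℝ)) →
      F x1 = F x2 → x1 = x2 := by
    intro x1 x2 h1 h2 heq
    by_contra hne
    have hne' : (x1 : ℝ) ≠ (x2 : ℝ) := fun h => hne (Subtype.ext h)
    rw [hF] at heq
    simp only [dif_pos h1, dif_pos h2] at heq
    rcases hne'.lt_or_gt with hlt | hlt
    · have hs1 := (hQ x1 h1).choose_spec
      have hs2 := (hQ x2 h2).choose_spec
      have hA1 : ((hQ x1 h1).choose : ℝ) < (x2 : ℝ) := hs1.2 x2 hlt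
      have hB1 : (x2 : ℝ) < ((hQ x2 h2).choose : ℝ) := hs2.1
      rw [heq] at hA1
      linarith
    · have hs1 := (hQ x1 h1).choose_spec
      have hs2 := (hQ x2 h2).choose_spec
      have hA1 : ((hQ x2 h2).choose : ℝ) < (x1 : ℝ) := hs2.2 x1 hlt
      have hB1 : (x1 : ℝ) < ((hQ x1 h1).choose : ℝ) := hs1.1
      rw [heq] at hB1
      linarith
  set A1 : Set ℝ := {x ∈ A | ∃ y ∈ A, x < y} with hA1
  set A2 : Set ℝ := {x ∈ A | ∀ y ∈ A, y ≤ x} with hA2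
  have hsplit : A ⊆ A1 ∪ A2 := by
    intro x hx
    by_cases h : ∃ y ∈ A, x < y
    · exact Or.inl ⟨hx, h⟩
    · push_neg at h
      exact Or.inr ⟨hx, h⟩
  have hA2sub : A2.Subsingleton := by
    intro x hx y hy
    exact le_antisymm (hy.2 x hx.1) (hx.2 y hy.1)
  have hA1count : A1.Countable := by
    rw [Set.countable_iff_exists_injOn]
    refine ⟨fun x => if hx : x ∈ A1 then Encodable.encode (F ⟨x, hx.1⟩) else 0, ?_⟩
    intro x hx y hy heq
    simp only [dif_pos hx, dif_pos hy] at heq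
    have h1 : ∃ w : A, ((⟨x, hx.1⟩ : A) : ℝ) < (w : ℝ) := by
      obtain ⟨w, hw, hlt⟩ := hx.2
      exact ⟨⟨w, hw⟩, hlt⟩
    have h2 : ∃ w : A, ((⟨y, hy.1⟩ : A) : ℝ) < (w : ℝ) := by
      obtain ⟨w, hw, hlt⟩ := hy.2
      exact ⟨⟨w, hw⟩, hlt⟩
    have := hinj _ _ h1 h2 (Encodable.encode_injective heq)
    exact congrArg Subtype.val this
  exact Set.Countable.mono hsplit (hA1count.union hA2sub.countable)

/-- `Xone` is countable. -/
lemma xone_countable : (Xone f).Countable := by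
  apply countable_of_wf
  have hsub : Subrelation (fun x y : (Xone f) => (x : ℝ) < (y : ℝ))
      (InvImage (WellOrderingRel : (ℝ → S) → (ℝ → S) → Prop)
        (fun x : (Xone f) => gmin f (x : ℝ))) := by
    intro x y hxy
    have hne : gmin f (y : ℝ) ≠ gmin f (x : ℝ) := x.2 (y : ℝ) hxy
    have hnl : ¬ WellOrderingRel (gmin f (y : ℝ)) (gmin f (x : ℝ)) := gmin_no_lt f hxy
    rcases trichotomous_of (WellOrderingRel : (ℝ → S) → (ℝ → S) → Prop)
        (gmin f (x : ℝ)) (gmin f (y : ℝ)) with h | h | h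
    · exact h
    · exact absurd h.symm hne
    · exact absurd h hnl
  exact Subrelation.wf hsub (InvImage.wf _ (IsWellFounded.wf))

/-- survivor construction : if the level of `x` extends above `x`, the true value `f x`
is realized at some point of `Mset f x`. -/
lemma survivor {x z : ℝ} (hxz : x < z) (hgz : gmin f z = gmin f x) :
    ∃ q, Rel (gmin f x) q f x ∧ gmin f x q = f x := by
  obtain ⟨pz, hrel⟩ := gmin_mem f z
  rw [hgz] at hrel
  obtain ⟨c, d, hc, hcd, hval⟩ := hrel
  have hc' : c ≠ 0 := ne_of_gt hc
  have hqp : (x - d) / c < pz := by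
    rw [div_lt_iff₀ hc]; nlinarith
  have harg : c * ((x - d) / c) + d = x := by field_simp; ring
  refine ⟨(x - d) / c, ⟨c, d, hc, harg, fun y hy => hval y (lt_trans hy hqp)⟩, ?_⟩
  have hv := hval _ hqp
  rw [hv, harg]

/-- Claim A : a non-level-max error point produces a bad maximum of its minimal realizer. -/
lemma claimA {x : ℝ} (hx : x ∉ Xone f) (herr : P f x ≠ f x) :
    ∃ m, Rel (gmin f x) m f x ∧ (∀ p, Rel (gmin f x) p f x → p ≤ m) ∧
      BadMax (gmin f x) m := by
  obtain ⟨z, hxz, hgz⟩ := not_xone f hx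
  obtain ⟨q, hqM, hqval⟩ := survivor f hxz hgz
  by_cases hMsel : (Msel f x).Nonempty
  · have hpmem := pick_mem hMsel
    obtain ⟨hpM, r, hrM, hpr⟩ := hpmem
    have hPval : P f x = gmin f x (pick (Msel f x)) := by
      unfold P sel
      rw [if_pos hMsel]
    have hpRel : Rel (gmin f x) (pick (Msel f x)) f x := hpM
    have hrRel : Rel (gmin f x) r f x := hrM
    have herr' : gmin f x (pick (Msel f x)) ≠ gmin f x q := by
      rw [hqval, ← hPval]
      exact herr
    have hnc : ∀ r', Rel (gmin f x) r' f x → ¬ (q < r' ∧ pick (Msel f x) < r') := by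
      rintro r' hr' ⟨h1, h2⟩
      have hq' : Rel (gmin f x) q (gmin f x) r' := rel_trans hqM (rel_symm hr')
      have hp' : Rel (gmin f x) (pick (Msel f x)) (gmin f x) r' :=
        rel_trans hpRel (rel_symm hr')
      exact herr' (vc hp' hq' h2 h1)
    have hrq : r ≤ q := by
      by_contra hlt
      push_neg at hlt
      exact hnc r hrRel ⟨hlt, hpr⟩
    have hpq : pick (Msel f x) < q := lt_of_lt_of_le hpr hrq
    have hmax : ∀ p', Rel (gmin f x) p' f x → p' ≤ q := by
      intro p' hp'
      by_contra hlt
      push_neg at hlt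
      exact hnc p' hp' ⟨hlt, lt_trans hpq hlt⟩
    refine ⟨q, hqM, hmax, ?_, ?_⟩
    · intro p' hp'
      exact hmax p' (rel_trans hp' hqM)
    · exact ⟨pick (Msel f x), rel_trans hpRel (rel_symm hqM), hpq, herr'⟩
  · exfalso
    have hsing : ∀ p1 p2, p1 ∈ Mset f x → p2 ∈ Mset f x → p1 = p2 := by
      intro p1 p2 h1 h2
      by_contra hne
      rcases Ne.lt_or_gt hne with h | h
      · exact hMsel ⟨p1, h1, p2, h2, h⟩
      · exact hMsel ⟨p2, h2, p1, h1, h⟩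
    have hPval : P f x = gmin f x (pick (Mset f x)) := by
      unfold P sel
      rw [if_neg hMsel]
    have hq : pick (Mset f x) = q := hsing _ _ (pick_mem ⟨q, hqM⟩) hqM
    rw [hPval, hq, hqval] at herr
    exact herr rfl

/-- The per-class error sets. -/
def Aset (g : ℝ → S) (m : ℝ) : Set ℝ :=
  {x | x ∉ Xone f ∧ P f x ≠ f x ∧ gmin f x = g ∧ Rel g m f x ∧ ∀ p, Rel g p f x → p ≤ m}

lemma aset_pair {g : ℝ → S} {m x1 x2 : ℝ} (h1 : x1 ∈ Aset f g m) (h2 : x2 ∈ Aset f g m)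
    (hlt : x1 < x2) : False := by
  obtain ⟨hX1, herr1, hg1, hm1, hmax1⟩ := h1
  obtain ⟨hX2, herr2, hg2, hm2, hmax2⟩ := h2
  obtain ⟨z, hxz, hgz⟩ := not_xone f hX2
  obtain ⟨pz, hrel⟩ := gmin_mem f z
  rw [hgz, hg2] at hrel
  obtain ⟨c, d, hc, hcd, hval⟩ := hrel
  have hc' : c ≠ 0 := ne_of_gt hc
  have hq2p : (x2 - d) / c < pz := by
    rw [div_lt_iff₀ hc]; nlinarith
  have hq1q2 : (x1 - d) / c < (x2 - d) / c := by
    rw [div_lt_div_iff_of_pos_right hc]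
    linarith
  have hq1p : (x1 - d) / c < pz := lt_trans hq1q2 hq2p
  have harg1 : c * ((x1 - d) / c) + d = x1 := by field_simp; ring
  have harg2 : c * ((x2 - d) / c) + d = x2 := by field_simp; ring
  have hq1rel : Rel g ((x1 - d) / c) f x1 :=
    ⟨c, d, hc, harg1, fun y hy => hval y (lt_trans hy hq1p)⟩
  have hq1val : g ((x1 - d) / c) = f x1 := by
    have hv := hval _ hq1p
    rw [hv, harg1]
  have hq2rel : Rel g ((x2 - d) / c) f x2 :=
    ⟨c, d, hc, harg2, fun y hy => hval y (lt_trans hy hq2p)⟩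
  -- transfer the second point into the class of `x1`
  have hq2rel1 : Rel g ((x2 - d) / c) f x1 :=
    rel_trans (rel_trans hq2rel (rel_symm hm2)) hm1
  have hq1M : (x1 - d) / c ∈ Mset f x1 := by
    show Rel (gmin f x1) ((x1 - d) / c) f x1
    rw [hg1]; exact hq1rel
  have hq2M : (x2 - d) / c ∈ Mset f x1 := by
    show Rel (gmin f x1) ((x2 - d) / c) f x1
    rw [hg1]; exact hq2rel1
  have hMsel : (Msel f x1).Nonempty := ⟨_, hq1M, _, hq2M, hq1q2⟩
  have hpmem := pick_mem hMsel
  obtain ⟨hpM, r, hrM, hpr⟩ := hpmem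
  have hPval : P f x1 = g (pick (Msel f x1)) := by
    unfold P sel
    rw [if_pos hMsel, hg1]
  have herr1' : g (pick (Msel f x1)) ≠ g ((x1 - d) / c) := by
    rw [hq1val, ← hPval]
    exact herr1
  have hpRel : Rel g (pick (Msel f x1)) f x1 := by
    have h := hpM
    rw [Mset, Set.mem_setOf_eq, hg1] at h
    exact h
  have hrRel : Rel g r f x1 := by
    have h := hrM
    rw [Mset, Set.mem_setOf_eq, hg1] at h
    exact h
  rcases lt_or_ge (pick (Msel f x1)) ((x2 - d) / c) with hcase | hcase
  · exact herr1' (vc (rel_trans hpRel (rel_symm hq2rel1))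
      (rel_trans hq1rel (rel_symm hq2rel1)) hcase hq1q2)
  · have hup : (x1 - d) / c < r := lt_of_le_of_lt (le_of_lt (lt_of_lt_of_le hq1q2 hcase)) hpr
    exact herr1' (vc (rel_trans hpRel (rel_symm hrRel))
      (rel_trans hq1rel (rel_symm hrRel)) hpr hup)

lemma aset_subsingleton (g : ℝ → S) (m : ℝ) : (Aset f g m).Subsingleton := by
  intro x1 hx1 x2 hx2
  by_contra hne
  rcases Ne.lt_or_gt hne with h | h
  · exact aset_pair f hx1 hx2 h
  · exact aset_pair f hx2 hx1 h

/-- The set of bad maxima of a fixed scenario is countable (it has at most two points). -/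
lemma badMax_countable (g : ℝ → S) : {m | BadMax g m}.Countable := by
  set s := {m | BadMax g m} with hs
  by_cases hne : s.Nonempty
  · obtain ⟨a, ha⟩ := hne
    by_cases h2 : ∃ b ∈ s, b ≠ a
    · obtain ⟨b, hb, hba⟩ := h2
      have hsub : s ⊆ {a, b} := by
        intro e he
        by_contra henot
        simp only [Set.mem_insert_iff, Set.mem_singleton_iff] at henot
        push_neg at henot
        obtain ⟨hea, heb⟩ := henot
        have hBa : BadMax g a := ha
        have hBb : BadMax g b := hb
        have hBe : BadMax g e := he
        rcases Ne.lt_or_gt hba with h1 | h1 <;>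
          rcases Ne.lt_or_gt hea with h2 | h2 <;>
            rcases Ne.lt_or_gt heb with h3 | h3
        · exact badMax_not3 h3 h1 hBe hBb hBa
        · exact badMax_not3 h3 h2 hBb hBe hBa
        · linarith
        · exact badMax_not3 h1 h2 hBb hBa hBe
        · exact badMax_not3 h2 h1 hBe hBa hBb
        · linarith
        · exact badMax_not3 h2 h3 hBa hBe hBb
        · exact badMax_not3 h1 h3 hBa hBb hBe
      exact Set.Countable.mono hsub ((Set.countable_singleton b).insert a)
    · push_neg at h2
      have hsub : s ⊆ {a} := by
        intro e he
        simp [h2 e he]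
      exact Set.Countable.mono hsub (Set.countable_singleton a)
  · rw [Set.not_nonempty_iff_eq_empty] at hne
    rw [hne]
    exact Set.countable_empty

/-- The predictor is correct off a countable set. -/
lemma goodness : {x : ℝ | P f x ≠ f x}.Countable := by
  have hsub : {x : ℝ | P f x ≠ f x} ⊆
      Xone f ∪ ⋃ (q : ℚ), ⋃ m ∈ {m | BadMax (gmin f (q : ℝ)) m},
        Aset f (gmin f (q : ℝ)) m := by
    intro x hx
    by_cases hX : x ∈ Xone f
    · exact Or.inl hX
    · right
      obtain ⟨z, hxz, hgz⟩ := not_xone f hX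
      obtain ⟨qr, hq1, hq2⟩ := exists_rat_btwn hxz
      have hgq : gmin f (qr : ℝ) = gmin f x := gmin_sandwich f hq1 hq2 hgz
      obtain ⟨m, hmrel, hmmax, hmbad⟩ := claimA f hX hx
      refine Set.mem_iUnion.mpr ⟨qr, Set.mem_iUnion₂.mpr ⟨m, ?_, ?_⟩⟩
      · show BadMax (gmin f (qr : ℝ)) m
        rw [hgq]
        exact hmbad
      · refine ⟨hX, hx, hgq.symm, ?_, ?_⟩
        · rw [hgq]; exact hmrel
        · intro p hp
          rw [hgq] at hp
          exact hmmax p hp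
  apply Set.Countable.mono hsub
  refine (xone_countable f).union ?_
  refine Set.countable_iUnion (fun q => ?_)
  exact Set.Countable.biUnion (badMax_countable (gmin f (q : ℝ)))
    (fun m _ => (aset_subsingleton f (gmin f (q : ℝ)) m).countable)

end Goodness

end T2AP

theorem T2_anonymous_predictor {S : Type*} [Nonempty S] :
    ∃ P : (ℝ → S) → (ℝ → S),
      (∀ (f g : ℝ → S) (x : ℝ), (∀ y < x, f y = g y) → P f x = P g x) ∧
      (∀ (f : ℝ → S) (a b : ℝ), 0 < a →
        P (fun y => f (a * y + b)) = fun x => P f (a * x + b)) ∧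
      ∀ f : ℝ → S, {x : ℝ | P f x ≠ f x}.Countable := by
  refine ⟨T2AP.P, ?_, ?_, ?_⟩
  · intro f g x h
    exact T2AP.P_congr (fun y hy => h y hy)
  · intro f a b ha
    funext x
    exact T2AP.P_anon ha
  · intro f
    exact T2AP.goodness f
end
end
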